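/- Let H, M_l, M_g be N×N complex matrices with H Hermitian and M_l, M_g Hermitian, and suppose Z is an N×N complex matrix satisfying the Sylvester equation Z⬝X + Xᴴ⬝Z + 2•(M_gᵀ − M_l) = 0, where X := −i•H + M_l + M_gᵀ. Define the 2N×2N matrices S := (1/√2)•fromBlocks(1, 1, 1+Z, Z−1) and Sinv := (1/√2)•fromBlocks(1−Z, 1, 1+Z, −1), and L_eff := fromBlocks(−i•H − M_l + M_gᵀ, 2•M_gᵀ, 2•M_l, −i•H + M_l − M_gᵀ). Then S⬝Sinv = 1, Sinv⬝S = 1, and S⬝L_eff⬝Sinv = fromBlocks(X, 0, 0, −Xᴴ). -/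
import Mathlib


open Matrix

private lemma half_smul {n : Type*} (A B : Matrix n n ℂ) (h : A = B + B) :
    (2⁻¹ : ℂ) • A = B := by
  rw [h, ← two_smul ℂ, smul_smul]
  norm_num

theorem stmt_0 {N : ℕ} (H Ml Mg Z : Matrix (Fin N) (Fin N) ℂ)
    (hH : H.IsHermitian) (hMl : Ml.IsHermitian) (hMg : Mg.IsHermitian)
    (X : Matrix (Fin N) (Fin N) ℂ)
    (hX : X = (-Complex.I) • H + Ml + Mgᵀ)
    (hZ : Z * X + Xᴴ * Z + (2 : ℂ) • (Mgᵀ - Ml) = 0)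
    (S Sinv Leff : Matrix (Fin N ⊕ Fin N) (Fin N ⊕ Fin N) ℂ)
    (hS : S = ((1 / Real.sqrt 2 : ℝ) : ℂ) • fromBlocks 1 1 (1 + Z) (Z - 1))
    (hSinv : Sinv = ((1 / Real.sqrt 2 : ℝ) : ℂ) • fromBlocks (1 - Z) 1 (1 + Z) (-1))
    (hLeff : Leff = fromBlocks ((-Complex.I) • H - Ml + Mgᵀ) ((2 : ℂ) • Mgᵀ)
      ((2 : ℂ) • Ml) ((-Complex.I) • H + Ml - Mgᵀ)) :
    S * Sinv = 1 ∧ Sinv * S = 1 ∧ S * Leff * Sinv = fromBlocks X 0 0 (-Xᴴ) := by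
  have hsq : ((1 / Real.sqrt 2 : ℝ) : ℂ) * ((1 / Real.sqrt 2 : ℝ) : ℂ) = 2⁻¹ := by
    rw [← Complex.ofReal_mul, div_mul_div_comm, one_mul,
      Real.mul_self_sqrt (by norm_num : (0:ℝ) ≤ 2)]
    norm_num
  have hMgT : (Mgᵀ)ᴴ = Mgᵀ := by
    ext i j
    simpa [conjTranspose_apply, transpose_apply] using congrFun (congrFun hMg.eq j) i
  have hXH : Xᴴ = Complex.I • H + Ml + Mgᵀ := by
    rw [hX, conjTranspose_add, conjTranspose_add, conjTranspose_smul, hMgT, hMl.eq, hH.eq]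
    congr 1
    congr 1
    simp
  simp only [neg_smul] at hX hLeff
  set K := Complex.I • H with hK
  have hZ' : Z * X + Xᴴ * Z + ((Mgᵀ - Ml) + (Mgᵀ - Ml)) = 0 := by
    rw [← two_smul ℂ (Mgᵀ - Ml)]; exact hZ
  refine ⟨?_, ?_, ?_⟩
  · rw [hS, hSinv, smul_mul_smul_comm, hsq, fromBlocks_multiply, ← fromBlocks_one,
      fromBlocks_smul, fromBlocks_inj]
    refine ⟨half_smul _ _ (by noncomm_ring), ?_, ?_, half_smul _ _ (by noncomm_ring)⟩
    · rw [show (1 : Matrix (Fin N) (Fin N) ℂ) * 1 + 1 * (-1) = 0 by noncomm_ring, smul_zero]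
    · rw [show (1 + Z) * (1 - Z) + (Z - 1) * (1 + Z) = (0 : Matrix (Fin N) (Fin N) ℂ) by
        noncomm_ring, smul_zero]
  · rw [hS, hSinv, smul_mul_smul_comm, hsq, fromBlocks_multiply, ← fromBlocks_one,
      fromBlocks_smul, fromBlocks_inj]
    refine ⟨half_smul _ _ (by noncomm_ring), ?_, ?_, half_smul _ _ (by noncomm_ring)⟩
    · rw [show (1 - Z) * 1 + 1 * (Z - 1) = (0 : Matrix (Fin N) (Fin N) ℂ) by noncomm_ring,
        smul_zero]
    · rw [show (1 + Z) * 1 + (-1) * (1 + Z) = (0 : Matrix (Fin N) (Fin N) ℂ) by noncomm_ring,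
        smul_zero]
  · rw [hS, hSinv, hLeff, smul_mul_assoc, smul_mul_smul_comm, hsq,
      fromBlocks_multiply, fromBlocks_multiply, fromBlocks_smul, fromBlocks_inj]
    simp only [two_smul]
    refine ⟨half_smul _ _ ?_, ?_, ?_, half_smul _ _ ?_⟩
    · rw [hX]; noncomm_ring
    · rw [show (1 * (-K - Ml + Mgᵀ) + 1 * (Ml + Ml)) * 1 +
        (1 * (Mgᵀ + Mgᵀ) + 1 * (-K + Ml - Mgᵀ)) * (-1) = (0 : Matrix (Fin N) (Fin N) ℂ) by
        noncomm_ring, smul_zero]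
    · have key : ((1 + Z) * (-K - Ml + Mgᵀ) + (Z - 1) * (Ml + Ml)) * (1 - Z) +
          ((1 + Z) * (Mgᵀ + Mgᵀ) + (Z - 1) * (-K + Ml - Mgᵀ)) * (1 + Z) =
          (Z * X + Xᴴ * Z + ((Mgᵀ - Ml) + (Mgᵀ - Ml))) +
          (Z * X + Xᴴ * Z + ((Mgᵀ - Ml) + (Mgᵀ - Ml))) := by
        rw [hXH, hX]; noncomm_ring
      rw [key, hZ', add_zero, smul_zero]
    · rw [hXH]; noncomm_ring
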